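/- Let γ : ℝ → ℂ be a C² immersed loop (γ twice continuously differentiable, γ(t+1) = γ(t), and deriv γ t ≠ 0 for all t), and let ξ ∈ ℂ with |ξ| = 1. Suppose the set Z = {t ∈ [0,1) : (deriv γ t)/‖deriv γ t‖ = ξ} is finite and for every t ∈ Z one has det(ξ, deriv (deriv γ) t) ≠ 0, where det(a,b) := a.re·b.im − a.im·b.re. Then ind(γ) = ∑_{t ∈ Z} sign(det(ξ, deriv (deriv γ) t)). -/

import Mathlib

open scoped BigOperators

open scoped BigOperators

lemma wie_floor_eq_of_no_int (f : ℝ → ℝ) (a b : ℝ) (hab : a ≤ b)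
    (hf : ContinuousOn f (Set.Icc a b))
    (h : ∀ t ∈ Set.Icc a b, ∀ m : ℤ, f t ≠ (m : ℝ)) :
    ⌊f b⌋ = ⌊f a⌋ := by
  set m := ⌊f a⌋ with hm
  have ha : a ∈ Set.Icc a b := ⟨le_refl a, hab⟩
  have hb : b ∈ Set.Icc a b := ⟨hab, le_refl b⟩
  have h1 : (m : ℝ) < f a := lt_of_le_of_ne (Int.floor_le _) (Ne.symm (h a ha m))
  have h2 : f a < (m : ℝ) + 1 := Int.lt_floor_add_one _
  have huIcc : Set.uIcc a b = Set.Icc a b := Set.uIcc_of_le hab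
  have hIV := intermediate_value_uIcc (huIcc ▸ hf)
  have hlow : (m : ℝ) < f b := by
    by_contra hle
    push_neg at hle
    have hmem : (m:ℝ) ∈ Set.uIcc (f a) (f b) := by
      rw [Set.mem_uIcc]; right; exact ⟨hle, le_of_lt h1⟩
    obtain ⟨c, hc, hfc⟩ := hIV hmem
    exact h c (huIcc ▸ hc) m hfc
  have hhigh : f b < (m : ℝ) + 1 := by
    by_contra hle
    push_neg at hle
    have hmem : ((m+1 : ℤ):ℝ) ∈ Set.uIcc (f a) (f b) := by
      rw [Set.mem_uIcc]; left; push_cast; exact ⟨le_of_lt h2, hle⟩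
    obtain ⟨c, hc, hfc⟩ := hIV hmem
    exact h c (huIcc ▸ hc) (m+1) hfc
  rw [Int.floor_eq_iff]
  · exact ⟨le_of_lt hlow, hhigh⟩

lemma wie_floor_single_cross_pos (f : ℝ → ℝ) (hf : Continuous f) (a b s : ℝ)
    (hsa : a < s) (hsb : s < b) (m : ℤ) (hfs : f s = (m : ℝ)) (L : ℝ)
    (hL : HasDerivAt f L s) (hLpos : 0 < L)
    (honly : ∀ t ∈ Set.Icc a b, t ≠ s → ∀ k : ℤ, f t ≠ (k : ℝ)) :
    ⌊f a⌋ = m - 1 ∧ ⌊f b⌋ = m := by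
  have hslope := hasDerivAt_iff_tendsto_slope.mp hL
  have hev : {t | 0 < slope f s t} ∈ nhdsWithin s {s}ᶜ :=
    hslope (Ioi_mem_nhds hLpos)
  rw [Metric.mem_nhdsWithin_iff] at hev
  obtain ⟨δ, hδ, hball⟩ := hev
  -- pick t₁ ∈ (a, s) close to s
  set t₁ := max ((a+s)/2) (s - δ/2) with ht₁def
  have ht₁a : a < t₁ := lt_max_of_lt_left (by linarith)
  have ht₁s : t₁ < s := max_lt (by linarith) (by linarith)
  have ht₁mem : t₁ ∈ Metric.ball s δ ∩ {s}ᶜ := by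
    constructor
    · rw [Metric.mem_ball, Real.dist_eq, abs_sub_lt_iff]
      constructor
      · linarith
      · have : s - δ/2 ≤ t₁ := le_max_right _ _
        linarith
    · exact ht₁s.ne
  have hslope₁ : 0 < slope f s t₁ := hball ht₁mem
  have hft₁lt : f t₁ < (m:ℝ) := by
    rw [slope_def_field] at hslope₁
    have hd : t₁ - s < 0 := by linarith
    rw [div_pos_iff] at hslope₁
    rcases hslope₁ with ⟨h1, h2⟩ | ⟨h1, h2⟩
    · linarith
    · rw [← hfs]; linarith
  -- pick t₂ ∈ (s, b) close to s
  set t₂ := min ((b+s)/2) (s + δ/2) with ht₂def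
  have ht₂b : t₂ < b := min_lt_of_left_lt (by linarith)
  have ht₂s : s < t₂ := lt_min (by linarith) (by linarith)
  have ht₂mem : t₂ ∈ Metric.ball s δ ∩ {s}ᶜ := by
    constructor
    · rw [Metric.mem_ball, Real.dist_eq, abs_sub_lt_iff]
      constructor
      · have : t₂ ≤ s + δ/2 := min_le_right _ _
        linarith
      · linarith
    · exact ht₂s.ne'
  have hslope₂ : 0 < slope f s t₂ := hball ht₂mem
  have hft₂gt : (m:ℝ) < f t₂ := by
    rw [slope_def_field] at hslope₂
    have hd : 0 < t₂ - s := by linarith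
    rw [div_pos_iff] at hslope₂
    rcases hslope₂ with ⟨h1, h2⟩ | ⟨h1, h2⟩
    · rw [← hfs]; linarith
    · linarith
  -- f t₁ ∈ (m-1, m)
  have hft₁gt : (m:ℝ) - 1 < f t₁ := by
    by_contra hle
    push_neg at hle
    have hne : f t₁ ≠ ((m - 1 : ℤ) : ℝ) :=
      honly t₁ ⟨le_of_lt ht₁a, by linarith⟩ ht₁s.ne (m-1)
    have hlt : f t₁ < ((m-1 : ℤ):ℝ) := by
      push_cast; push_cast at hne; exact lt_of_le_of_ne (by linarith) (by exact_mod_cast hne)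
    have hIV := intermediate_value_uIcc (a := t₁) (b := s) (hf.continuousOn (s := Set.uIcc t₁ s))
    have hmem : ((m-1:ℤ):ℝ) ∈ Set.uIcc (f t₁) (f s) := by
      rw [Set.mem_uIcc]; left
      constructor
      · linarith
      · rw [hfs]; push_cast; linarith
    obtain ⟨c, hc, hfc⟩ := hIV hmem
    rw [Set.uIcc_of_le (le_of_lt ht₁s)] at hc
    have hcs : c ≠ s := by
      intro he; rw [he, hfs] at hfc
      have : (m:ℝ) ≠ ((m-1:ℤ):ℝ) := by push_cast; linarith
      exact this hfc
    exact honly c ⟨by linarith [hc.1], by linarith [hc.2]⟩ hcs (m-1) hfc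
  -- f t₂ ∈ (m, m+1)
  have hft₂lt : f t₂ < (m:ℝ) + 1 := by
    by_contra hle
    push_neg at hle
    have hne : f t₂ ≠ ((m + 1 : ℤ) : ℝ) :=
      honly t₂ ⟨by linarith, le_of_lt ht₂b⟩ ht₂s.ne' (m+1)
    have hlt : ((m+1 : ℤ):ℝ) < f t₂ := by
      push_cast; push_cast at hne
      exact lt_of_le_of_ne (by linarith) (by intro he; exact hne he.symm)
    have hIV := intermediate_value_uIcc (a := s) (b := t₂) (hf.continuousOn (s := Set.uIcc s t₂))
    have hmem : ((m+1:ℤ):ℝ) ∈ Set.uIcc (f s) (f t₂) := by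
      rw [Set.mem_uIcc]; left
      constructor
      · rw [hfs]; push_cast; linarith
      · linarith
    obtain ⟨c, hc, hfc⟩ := hIV hmem
    rw [Set.uIcc_of_le (le_of_lt ht₂s)] at hc
    have hcs : c ≠ s := by
      intro he; rw [he, hfs] at hfc
      have : (m:ℝ) ≠ ((m+1:ℤ):ℝ) := by push_cast; linarith
      exact this hfc
    exact honly c ⟨by linarith [hc.1], by linarith [hc.2]⟩ hcs (m+1) hfc
  -- floors on [a,t₁] and [t₂,b]
  have hfloor_t₁ : ⌊f t₁⌋ = m - 1 := by
    rw [Int.floor_eq_iff]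
    push_cast
    exact ⟨le_of_lt hft₁gt, by linarith⟩
  have hfloor_t₂ : ⌊f t₂⌋ = m := by
    rw [Int.floor_eq_iff]
    exact ⟨le_of_lt hft₂gt, by push_cast; linarith⟩
  constructor
  · rw [← hfloor_t₁]
    exact (wie_floor_eq_of_no_int f a t₁ (le_of_lt ht₁a) (hf.continuousOn)
      (fun t ht k => honly t ⟨ht.1, by linarith [ht.2]⟩ (by intro he; subst he; linarith [ht.2]) k)).symm
  · rw [← hfloor_t₂]
    exact wie_floor_eq_of_no_int f t₂ b (le_of_lt ht₂b) (hf.continuousOn)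
      (fun t ht k => honly t ⟨by linarith [ht.1], ht.2⟩ (by intro he; subst he; linarith [ht.1]) k)

lemma wie_floor_neg_of_not_int (x : ℝ) (h : ∀ k : ℤ, x ≠ (k:ℝ)) : ⌊-x⌋ = -⌊x⌋ - 1 := by
  have h1 : (⌊x⌋ : ℝ) < x := lt_of_le_of_ne (Int.floor_le _) (Ne.symm (h ⌊x⌋))
  have h2 : x < (⌊x⌋ : ℝ) + 1 := Int.lt_floor_add_one _
  rw [Int.floor_eq_iff]
  push_cast
  constructor <;> linarith

lemma wie_count_crossings (f d : ℝ → ℝ) (hf : Continuous f)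
    (hder : ∀ t, HasDerivAt f (d t) t) :
    ∀ (n : ℕ) (T : Finset ℝ) (a b : ℝ), a ≤ b → T.card = n →
    (∀ t ∈ T, t ∈ Set.Ioo a b) →
    (∀ t ∈ T, d t ≠ 0) →
    (∀ t ∈ Set.Icc a b, ((∃ m : ℤ, f t = (m:ℝ)) ↔ t ∈ T)) →
    ((⌊f b⌋:ℝ) - (⌊f a⌋:ℝ) = ∑ t ∈ T, Real.sign (d t)) := by
  intro n
  induction n with
  | zero =>
    intro T a b hab hcard hsub hd hiff
    rw [Finset.card_eq_zero] at hcard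
    subst hcard
    have hno : ∀ t ∈ Set.Icc a b, ∀ m : ℤ, f t ≠ (m:ℝ) := by
      intro t ht m he
      exact absurd ((hiff t ht).mp ⟨m, he⟩) (Finset.notMem_empty t)
    rw [wie_floor_eq_of_no_int f a b hab hf.continuousOn hno]
    simp
  | succ k ih =>
    intro T a b hab hcard hsub hd hiff
    have hne : T.Nonempty := Finset.card_pos.mp (by omega)
    set s := T.max' hne with hsdef
    have hsT : s ∈ T := T.max'_mem hne
    have hsIoo : s ∈ Set.Ioo a b := hsub s hsT
    obtain ⟨m, hm⟩ := (hiff s ⟨le_of_lt hsIoo.1, le_of_lt hsIoo.2⟩).mpr hsT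
    set T' := T.erase s with hT'def
    have hT'card : T'.card = k := by
      rw [hT'def, Finset.card_erase_of_mem hsT, hcard]; omega
    -- the auxiliary point a' and midpoint c
    set A := insert a T' with hAdef
    have hAne : A.Nonempty := Finset.insert_nonempty _ _
    set a' := A.max' hAne with ha'def
    have ha'lt : a' < s := by
      apply Finset.max'_lt_iff A hAne |>.mpr
      intro y hy
      rcases Finset.mem_insert.mp hy with rfl | hy'
      · exact hsIoo.1
      · have hyT : y ∈ T := Finset.mem_of_mem_erase hy'
        have hys : y ≠ s := Finset.ne_of_mem_erase hy'
        exact lt_of_le_of_ne (Finset.le_max' T y hyT) hys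
    have ha'ge : a ≤ a' := Finset.le_max' A a (Finset.mem_insert_self a T')
    set c := (a' + s)/2 with hcdef
    have hca' : a' < c := by rw [hcdef]; linarith
    have hcs : c < s := by rw [hcdef]; linarith
    have hac : a < c := lt_of_le_of_lt ha'ge hca'
    have hcb : c < b := lt_trans hcs hsIoo.2
    have hcT : c ∉ T := by
      intro hc
      have hcns : c ≠ s := ne_of_lt hcs
      have : c ∈ T' := Finset.mem_erase.mpr ⟨hcns, hc⟩
      have := Finset.le_max' A c (Finset.mem_insert_of_mem this)
      linarith
    -- induction hypothesis on [a, c]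
    have hIH := ih T' a c (le_of_lt hac) hT'card
      (by
        intro t ht
        have htT : t ∈ T := Finset.mem_of_mem_erase ht
        refine ⟨(hsub t htT).1, ?_⟩
        have := Finset.le_max' A t (Finset.mem_insert_of_mem ht)
        linarith)
      (fun t ht => hd t (Finset.mem_of_mem_erase ht))
      (by
        intro t ht
        constructor
        · intro hex
          have htT : t ∈ T := (hiff t ⟨ht.1, le_trans ht.2 (le_of_lt hcb)⟩).mp hex
          refine Finset.mem_erase.mpr ⟨?_, htT⟩
          intro he; subst he; linarith [ht.2]
        · intro ht'
          exact (hiff t ⟨ht.1, le_trans ht.2 (le_of_lt hcb)⟩).mpr (Finset.mem_of_mem_erase ht'))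
    -- single crossing on [c, b]
    have honly : ∀ t ∈ Set.Icc c b, t ≠ s → ∀ kk : ℤ, f t ≠ (kk:ℝ) := by
      intro t ht hts kk he
      have htT : t ∈ T := (hiff t ⟨le_trans (le_of_lt hac) ht.1, ht.2⟩).mp ⟨kk, he⟩
      have : t ∈ T' := Finset.mem_erase.mpr ⟨hts, htT⟩
      have := Finset.le_max' A t (Finset.mem_insert_of_mem this)
      linarith [ht.1]
    have hds := hd s hsT
    have hsingle : (⌊f b⌋:ℝ) - (⌊f c⌋:ℝ) = Real.sign (d s) := by
      rcases lt_or_gt_of_ne hds with hneg | hpos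
      · -- negative: apply the positive lemma to -f
        have hLneg : HasDerivAt (fun t => -(f t)) (-(d s)) s := (hder s).neg
        have h0 : (0:ℝ) < -(d s) := by linarith
        have hres := wie_floor_single_cross_pos (fun t => -(f t)) hf.neg c b s hcs hsIoo.2
          (-m) (by push_cast; rw [hm]) (-(d s)) hLneg h0
          (by
            intro t ht hts kk he
            have : f t = ((-kk : ℤ):ℝ) := by push_cast; push_cast at he; linarith
            exact honly t ht hts (-kk) this)
        have hfcni : ∀ kk : ℤ, f c ≠ (kk:ℝ) := by
          intro kk he
          exact hcT ((hiff c ⟨le_of_lt hac, le_of_lt hcb⟩).mp ⟨kk, he⟩)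
        have hfbni : ∀ kk : ℤ, f b ≠ (kk:ℝ) := by
          intro kk he
          have := (hiff b ⟨hab, le_refl b⟩).mp ⟨kk, he⟩
          exact absurd (hsub b this).2 (lt_irrefl b)
        have e1 : ⌊-(f c)⌋ = -⌊f c⌋ - 1 := wie_floor_neg_of_not_int _ hfcni
        have e2 : ⌊-(f b)⌋ = -⌊f b⌋ - 1 := wie_floor_neg_of_not_int _ hfbni
        have hc1 : -⌊f c⌋ - 1 = -m - 1 := by rw [← e1]; exact hres.1
        have hb1 : -⌊f b⌋ - 1 = -m := by rw [← e2]; exact hres.2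
        have : ⌊f c⌋ = m := by omega
        have hb2 : ⌊f b⌋ = m - 1 := by omega
        rw [this, hb2, Real.sign_of_neg hneg]
        push_cast; ring
      · have hres := wie_floor_single_cross_pos f hf c b s hcs hsIoo.2 m hm (d s) (hder s) hpos honly
        rw [hres.1, hres.2, Real.sign_of_pos hpos]
        push_cast; ring
    have hsum : Real.sign (d s) + ∑ t ∈ T', Real.sign (d t) = ∑ t ∈ T, Real.sign (d t) :=
      Finset.add_sum_erase T (fun t => Real.sign (d t)) hsT
    rw [← hsum, ← hIH, ← hsingle]
    ring

open Complex Real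

theorem whitney_index_eq_gauss_preimages (γ : ℝ → ℂ) (hγ : ContDiff ℝ 2 γ)
    (hper : ∀ t, γ (t + 1) = γ t) (himm : ∀ t, deriv γ t ≠ 0)
    (ξ : ℂ) (hξ : ‖ξ‖ = 1)
    (hZ : {t ∈ Set.Ico (0:ℝ) 1 | deriv γ t / (‖deriv γ t‖ : ℂ) = ξ}.Finite)
    (hreg : ∀ t ∈ {t ∈ Set.Ico (0:ℝ) 1 | deriv γ t / (‖deriv γ t‖ : ℂ) = ξ},
      ξ.re * (deriv (deriv γ) t).im - ξ.im * (deriv (deriv γ) t).re ≠ 0) :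
    (1 / (2 * (Real.pi : ℂ) * Complex.I)) *
        (∫ t in (0:ℝ)..1, deriv (deriv γ) t / deriv γ t)
      = ((∑ t ∈ hZ.toFinset,
          Real.sign (ξ.re * (deriv (deriv γ) t).im - ξ.im * (deriv (deriv γ) t).re) : ℝ) : ℂ) := by
  classical
  set u : ℝ → ℂ := deriv γ with hu_def
  have h2 : ContDiff ℝ (1+1 : ℕ) γ := by exact_mod_cast hγ
  have hu1 : ContDiff ℝ 1 u := by
    have := (contDiff_succ_iff_deriv (n := (1:ℕ))).mp (by exact_mod_cast hγ)
    exact this.2.2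
  have hu_cont : Continuous u := hu1.continuous
  have hu_diff : Differentiable ℝ u := hu1.differentiable one_ne_zero
  have hu'_cont : Continuous (deriv u) := hu1.continuous_deriv le_rfl
  have huper : ∀ t, u (t + 1) = u t := by
    intro t
    have hγe : (fun s => γ (s + 1)) = γ := funext fun s => hper s
    calc u (t + 1) = deriv (fun s => γ (s + 1)) t := (deriv_comp_add_const γ 1 t).symm
    _ = u t := by rw [hγe]
  have hu'per : ∀ t, deriv u (t + 1) = deriv u t := by
    intro t
    have hue : (fun s => u (s + 1)) = u := funext fun s => huper s
    calc deriv u (t + 1) = deriv (fun s => u (s + 1)) t := (deriv_comp_add_const u 1 t).symm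
    _ = deriv u t := by rw [hue]
  set q : ℝ → ℂ := fun t => deriv u t / u t with hq_def
  have hq_cont : Continuous q := hu'_cont.div hu_cont himm
  have hqper : ∀ t, q (t + 1) = q t := by
    intro t; simp only [hq_def, hu'per t, huper t]
  set h : ℝ → ℂ := fun t => ∫ s in (0:ℝ)..t, q s with hh_def
  have hh : ∀ t, HasDerivAt h (q t) t := fun t =>
    (hq_cont.integral_hasStrictDerivAt 0 t).hasDerivAt
  -- u t = u 0 * exp (h t)
  have hconst : ∀ t, u t * Complex.exp (-(h t)) = u 0 := by
    have hF : ∀ t, HasDerivAt (fun t => u t * Complex.exp (-(h t))) 0 t := by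
      intro t
      have h1 : HasDerivAt u (deriv u t) t := (hu_diff t).hasDerivAt
      have h2 : HasDerivAt (fun t => Complex.exp (-(h t))) (Complex.exp (-(h t)) * (-(q t))) t :=
        ((hh t).neg).cexp
      have h3 := h1.mul h2
      have he : deriv u t * Complex.exp (-(h t)) + u t * (Complex.exp (-(h t)) * -(q t)) = 0 := by
        rw [hq_def]
        field_simp [himm t]
        ring
      rw [he] at h3
      exact h3
    have hFd : Differentiable ℝ (fun t => u t * Complex.exp (-(h t))) :=
      fun t => (hF t).differentiableAt
    have hFd0 : ∀ t, deriv (fun t => u t * Complex.exp (-(h t))) t = 0 :=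
      fun t => (hF t).deriv
    intro t
    have := is_const_of_deriv_eq_zero hFd hFd0 t 0
    simpa [hh_def, intervalIntegral.integral_same] using this
  have hu_eq : ∀ t, u t = u 0 * Complex.exp (h t) := by
    intro t
    have := hconst t
    have hne : Complex.exp (-(h t)) ≠ 0 := Complex.exp_ne_zero _
    rw [← this, mul_assoc, ← Complex.exp_add, neg_add_cancel, Complex.exp_zero, mul_one]
  -- winding number
  have hexp1 : Complex.exp (h 1) = 1 := by
    have h01 : u 1 = u 0 := by simpa using huper 0
    have := hu_eq 1
    rw [h01] at this
    field_simp [himm 0] at this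
    exact this.symm
  obtain ⟨n, hn⟩ : ∃ n : ℤ, h 1 = n * (2 * Real.pi * Complex.I) :=
    Complex.exp_eq_one_iff.mp hexp1
  have hpi_ne : (2 * (Real.pi : ℂ) * Complex.I) ≠ 0 := by
    simp [Real.pi_ne_zero, Complex.I_ne_zero, Complex.ofReal_ne_zero]
  have hLHS : (1 / (2 * (Real.pi : ℂ) * Complex.I)) *
      (∫ t in (0:ℝ)..1, deriv (deriv γ) t / deriv γ t) = (n : ℂ) := by
    have : (∫ t in (0:ℝ)..1, deriv (deriv γ) t / deriv γ t) = h 1 := rfl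
    rw [this, hn]
    field_simp
  -- shift law for h
  have hshift : ∀ t, h (t + 1) = h t + h 1 := by
    intro t
    have hint : ∀ a b : ℝ, IntervalIntegrable q MeasureTheory.volume a b :=
      fun a b => hq_cont.intervalIntegrable a b
    have hadd : h t + (∫ s in t..(t+1), q s) = h (t+1) :=
      intervalIntegral.integral_add_adjacent_intervals (hint 0 t) (hint t (t+1))
    have hper' : Function.Periodic q 1 := hqper
    have := hper'.intervalIntegral_add_eq t 0
    simp only [zero_add] at this
    rw [← hadd, this]
  -- the Gauss map and the lift f
  have habs : ∀ t, (‖u t‖ : ℝ) = ‖u 0‖ * Real.exp ((h t).re) := by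
    intro t
    rw [hu_eq t]
    simp [norm_mul, Complex.norm_exp]
  have hgauss : ∀ t, u t / (‖u t‖ : ℂ) = (u 0 / (‖u 0‖ : ℂ)) * Complex.exp ((h t).im * Complex.I) := by
    intro t
    have hu0 : (‖u 0‖ : ℂ) ≠ 0 := by
      simp [Complex.ofReal_ne_zero, norm_ne_zero_iff, himm 0]
    have hexpre : (Real.exp ((h t).re) : ℂ) ≠ 0 := by
      simp [Complex.ofReal_ne_zero, Real.exp_ne_zero]
    have hsplit : Complex.exp (h t) = Complex.exp (((h t).re : ℂ)) * Complex.exp ((h t).im * Complex.I) := by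
      rw [← Complex.exp_add]
      congr 1
      exact (Complex.re_add_im (h t)).symm
    rw [habs t, hu_eq t]
    push_cast [Complex.ofReal_exp]
    rw [mul_div_mul_comm, ← Complex.exp_sub]
    congr 2
    apply Complex.ext <;> simp
  set w : ℂ := u 0 / (‖u 0‖ : ℂ) with hw_def
  have hwabs : ‖w‖ = 1 := by
    have h0 : ‖u 0‖ ≠ 0 := by simpa using himm 0
    rw [hw_def, norm_div, Complex.norm_real, norm_norm, div_self h0]
  have hwexp : Complex.exp ((Complex.arg w : ℂ) * Complex.I) = w := by
    have := Complex.norm_mul_exp_arg_mul_I w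
    rwa [hwabs, Complex.ofReal_one, one_mul] at this
  have hξexp : Complex.exp ((Complex.arg ξ : ℂ) * Complex.I) = ξ := by
    have := Complex.norm_mul_exp_arg_mul_I ξ
    rwa [hξ, Complex.ofReal_one, one_mul] at this
  set f : ℝ → ℝ := fun t => ((h t).im + Complex.arg w - Complex.arg ξ) / (2 * Real.pi) with hf_def
  have hkey : ∀ t, (u t / (‖u t‖ : ℂ) = ξ) ↔ (∃ m : ℤ, f t = (m:ℝ)) := by
    intro t
    rw [hgauss t, ← hwexp, ← hξexp, ← Complex.exp_add]
    rw [Complex.exp_eq_exp_iff_exists_int]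
    constructor
    · rintro ⟨m, hm⟩
      refine ⟨m, ?_⟩
      have him := congrArg Complex.im hm
      simp only [Complex.add_im, Complex.mul_im, Complex.ofReal_re, Complex.I_im,
        Complex.ofReal_im, Complex.I_re, Complex.mul_re, Complex.intCast_im, Complex.intCast_re,
        Complex.re_ofNat, Complex.im_ofNat, one_mul, mul_one, zero_mul, mul_zero, add_zero,
        zero_add, sub_zero] at him
      rw [hf_def]
      field_simp [Real.pi_ne_zero]
      push_cast at him ⊢
      linarith
    · rintro ⟨m, hm⟩
      refine ⟨m, ?_⟩
      rw [hf_def] at hm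
      have hm' : (h t).im + Complex.arg w - Complex.arg ξ = m * (2 * Real.pi) := by
        field_simp at hm
        linarith
      have hC := congrArg (fun x : ℝ => (x : ℂ)) hm'
      push_cast at hC
      linear_combination Complex.I * hC
  -- periodicity of f and its derivative
  have hfper : ∀ t, f (t + 1) = f t + n := by
    intro t
    have him1 : (h 1).im = n * (2 * Real.pi) := by
      rw [hn]
      simp [Complex.mul_im, Complex.mul_re]
    rw [hf_def]
    simp only
    rw [hshift t, Complex.add_im, him1]
    field_simp
    ring
  set d : ℝ → ℝ := fun t => (q t).im / (2 * Real.pi) with hd_def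
  have hdper : ∀ t, d (t + 1) = d t := by
    intro t; rw [hd_def]; simp only [hqper t]
  have hfder : ∀ t, HasDerivAt f (d t) t := by
    intro t
    have himd : HasDerivAt (fun t => (h t).im) ((q t).im) t := by
      have h1 := (Complex.imCLM.hasFDerivAt (x := h t)).comp t (hh t).hasFDerivAt
      have h2 := h1.hasDerivAt
      exact h2.congr_deriv (by simp)
    have h3 := ((himd.add_const (Complex.arg w)).sub_const (Complex.arg ξ)).div_const (2 * Real.pi)
    exact h3
  have hf_cont : Continuous f := by
    have hdiffh : Differentiable ℝ h := fun t => (hh t).differentiableAt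
    have hhc : Continuous h := hdiffh.continuous
    rw [hf_def]
    exact (((Complex.continuous_im.comp hhc).add continuous_const).sub continuous_const).div_const _
  -- sign identity at crossing points
  have hcross_sign : ∀ t, u t / (‖u t‖ : ℂ) = ξ →
      (ξ.re * (deriv u t).im - ξ.im * (deriv u t).re ≠ 0 →
        (Real.sign (d t) = Real.sign (ξ.re * (deriv u t).im - ξ.im * (deriv u t).re) ∧ d t ≠ 0)) := by
    intro t hg hdet
    have hr : (0:ℝ) < ‖u t‖ := norm_pos_iff.mpr (himm t)
    have hne : ((‖u t‖ : ℝ) : ℂ) ≠ 0 := Complex.ofReal_ne_zero.mpr (ne_of_gt hr)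
    have hut : u t = (‖u t‖ : ℂ) * ξ := by
      rw [← hg, mul_div_assoc', mul_comm, mul_div_assoc, div_self hne, mul_one]
    set z := deriv u t with hz_def
    set D := ξ.re * z.im - ξ.im * z.re with hD_def
    have hnsq2 : Complex.normSq ((‖u t‖ : ℂ) * ξ) = ‖u t‖^2 := by
      rw [map_mul, Complex.normSq_eq_norm_sq, Complex.normSq_eq_norm_sq, hξ, Complex.norm_real,
        norm_norm]
      ring
    have hqim : (q t).im = D / ‖u t‖ := by
      have hre : ((‖u t‖ : ℂ) * ξ).re = ‖u t‖ * ξ.re := by simp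
      have him : ((‖u t‖ : ℂ) * ξ).im = ‖u t‖ * ξ.im := by simp
      have hq' : q t = z / ((‖u t‖ : ℂ) * ξ) := by
        rw [hq_def]
        simp only [← hz_def, ← hut]
      have habs0 : ‖u t‖ ≠ 0 := norm_ne_zero_iff.mpr (himm t)
      rw [hq', Complex.div_im, hnsq2, hre, him, hD_def]
      field_simp [habs0]
    have hd_eq : d t = D / (‖u t‖ * (2 * Real.pi)) := by
      rw [hd_def]
      simp only [hqim]
      field_simp
    have hden : (0:ℝ) < ‖u t‖ * (2 * Real.pi) := by positivity
    rcases lt_or_gt_of_ne hdet with hDneg | hDpos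
    · have hdtneg : d t < 0 := by
        rw [hd_eq]; exact div_neg_of_neg_of_pos hDneg hden
      rw [Real.sign_of_neg hdtneg, Real.sign_of_neg hDneg]
      exact ⟨rfl, ne_of_lt hdtneg⟩
    · have hdtpos : 0 < d t := by
        rw [hd_eq]; exact div_pos hDpos hden
      rw [Real.sign_of_pos hdtpos, Real.sign_of_pos hDpos]
      exact ⟨rfl, ne_of_gt hdtpos⟩
  -- choose a base point c avoiding crossings
  set Z : Set ℝ := {t | t ∈ Set.Ico (0:ℝ) 1 ∧ u t / (‖u t‖ : ℂ) = ξ} with hZ_def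
  obtain ⟨c, hcmem, hcZ⟩ : ∃ c, c ∈ Set.Ioo (0:ℝ) 1 ∧ c ∉ Z := by
    obtain ⟨c, hc⟩ := ((Set.Ioo_infinite (by norm_num : (0:ℝ) < 1)).diff hZ).nonempty
    exact ⟨c, hc.1, hc.2⟩
  set ψ : ℝ → ℝ := fun t => if t < c then t + 1 else t with hψ_def
  set Zf := hZ.toFinset with hZf_def
  have hZfmem : ∀ t, t ∈ Zf ↔ (t ∈ Set.Ico (0:ℝ) 1 ∧ u t / (‖u t‖ : ℂ) = ξ) := by
    intro t
    rw [hZf_def, Set.Finite.mem_toFinset]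
    exact Iff.rfl
  set T := Zf.image ψ with hT_def
  have hfc_ni : ∀ m : ℤ, f c ≠ (m:ℝ) := by
    intro m hm
    exact hcZ ⟨⟨le_of_lt hcmem.1, hcmem.2⟩, (hkey c).mpr ⟨m, hm⟩⟩
  have hTmem : ∀ t ∈ Set.Icc c (c+1), ((∃ m : ℤ, f t = (m:ℝ)) ↔ t ∈ T) := by
    intro t ht
    constructor
    · rintro ⟨m, hm⟩
      have hg : u t / (‖u t‖ : ℂ) = ξ := (hkey t).mpr ⟨m, hm⟩
      rcases lt_or_ge t 1 with h1 | h1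
      · have htZ : t ∈ Zf := (hZfmem t).mpr ⟨⟨by linarith [ht.1, hcmem.1], h1⟩, hg⟩
        have htc : ¬ (t < c) := not_lt.mpr ht.1
        rw [hT_def]
        refine Finset.mem_image.mpr ⟨t, htZ, ?_⟩
        rw [hψ_def]; simp [htc]
      · have hg' : u (t-1) / (‖u (t-1)‖ : ℂ) = ξ := by
          have := huper (t-1)
          rw [show t - 1 + 1 = t by ring] at this
          rw [← this]; exact hg
        have ht1Z : t - 1 ∈ Zf := (hZfmem (t-1)).mpr ⟨⟨by linarith, by linarith [ht.2, hcmem.2]⟩, hg'⟩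
        have hlt : t - 1 < c := by
          rcases lt_or_eq_of_le (show t - 1 ≤ c by linarith [ht.2]) with hlt | heq
          · exact hlt
          · exfalso; exact hcZ (by rw [← heq]; exact (hZfmem (t-1)).mp ht1Z)
        rw [hT_def]
        refine Finset.mem_image.mpr ⟨t - 1, ht1Z, ?_⟩
        rw [hψ_def]; simp only [if_pos hlt]; ring
    · intro htT
      rw [hT_def] at htT
      obtain ⟨s, hsZ, hst⟩ := Finset.mem_image.mp htT
      have hsZ' := (hZfmem s).mp hsZ
      obtain ⟨m, hm⟩ := (hkey s).mp hsZ'.2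
      rw [hψ_def] at hst
      by_cases hsc : s < c
      · simp only [if_pos hsc] at hst
        refine ⟨m + n, ?_⟩
        rw [← hst, hfper s, hm]
        push_cast; ring
      · simp only [if_neg hsc] at hst
        exact ⟨m, by rw [← hst]; exact hm⟩
  have hTsub : ∀ t ∈ T, t ∈ Set.Ioo c (c+1) := by
    intro t htT
    rw [hT_def] at htT
    obtain ⟨s, hsZ, hst⟩ := Finset.mem_image.mp htT
    have hsZ' := (hZfmem s).mp hsZ
    rw [hψ_def] at hst
    by_cases hsc : s < c
    · simp only [if_pos hsc] at hst
      constructor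
      · rw [← hst]; linarith [hsZ'.1.1, hcmem.2]
      · rw [← hst]; linarith
    · simp only [if_neg hsc] at hst
      have hne : s ≠ c := by
        intro he; exact hcZ (he ▸ hsZ')
      constructor
      · rw [← hst]; exact lt_of_le_of_ne (not_lt.mp hsc) (Ne.symm hne)
      · rw [← hst]; linarith [hsZ'.1.2, hcmem.1]
  have hTd : ∀ t ∈ T, d t ≠ 0 := by
    intro t htT
    rw [hT_def] at htT
    obtain ⟨s, hsZ, hst⟩ := Finset.mem_image.mp htT
    have hsZ' := (hZfmem s).mp hsZ
    have hds := (hcross_sign s hsZ'.2 (hreg s hsZ')).2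
    rw [hψ_def] at hst
    by_cases hsc : s < c
    · simp only [if_pos hsc] at hst
      rw [← hst, hdper s]; exact hds
    · simp only [if_neg hsc] at hst
      rw [← hst]; exact hds
  -- apply the counting lemma
  have hcount := wie_count_crossings f d hf_cont hfder T.card T c (c+1)
    (by linarith) rfl hTsub hTd hTmem
  have hfloor : (⌊f (c+1)⌋ : ℝ) - (⌊f c⌋ : ℝ) = (n : ℝ) := by
    rw [hfper c, Int.floor_add_intCast]
    push_cast; ring
  have hinj : ∀ x ∈ Zf, ∀ y ∈ Zf, ψ x = ψ y → x = y := by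
    intro x hx y hy hxy
    have hx' := ((hZfmem x).mp hx).1
    have hy' := ((hZfmem y).mp hy).1
    rw [hψ_def] at hxy
    simp only at hxy
    split_ifs at hxy with h1 h2 h2
    · linarith
    · exfalso; linarith [hx'.1, hy'.2, hcmem.2]
    · exfalso; linarith [hy'.1, hx'.2, hcmem.2]
    · exact hxy
  have hsum_eq : ∑ t ∈ T, Real.sign (d t)
      = ∑ t ∈ Zf, Real.sign (ξ.re * (deriv u t).im - ξ.im * (deriv u t).re) := by
    rw [hT_def, Finset.sum_image hinj]
    apply Finset.sum_congr rfl
    intro s hsZ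
    have hsZ' := (hZfmem s).mp hsZ
    have hsign := (hcross_sign s hsZ'.2 (hreg s hsZ')).1
    rw [hψ_def]
    by_cases hsc : s < c
    · simp only [if_pos hsc]
      rw [hdper s, hsign]
    · simp only [if_neg hsc]
      rw [hsign]
  have hreal : (n : ℝ) = ∑ t ∈ Zf, Real.sign (ξ.re * (deriv u t).im - ξ.im * (deriv u t).re) := by
    rw [← hsum_eq, ← hcount, hfloor]
  rw [hLHS]
  rw [hZf_def] at hreal
  rw [← hreal]
  push_cast
  ring
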